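/- Let T ∈ ℝ and let z : [T,∞) → (0,1] be continuous with ∫_T^∞ (1 − z(u))/z(u) du < ∞ and ∫_T^∞ (u − T)·(1 − z(u))/z(u) du < ∞. Let ϑ : [T,∞) → ℝ be differentiable and satisfy ϑ(t) = 1 + z(t)·(ϑ(t) − ϑ'(t)) for all t ≥ T. Then the limit as t → ∞ of ϑ(t) − t exists and is a finite real number. -/

import Mathlib

open MeasureTheory Filter Topology Set

theorem stmt_15 (T : ℝ) (z : ℝ → ℝ)
    (hzrange : ∀ t ∈ Ici T, z t ∈ Ioc (0:ℝ) 1)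
    (hzcont : ContinuousOn z (Ici T))
    (hint1 : IntegrableOn (fun u => (1 - z u) / z u) (Ici T))
    (hint2 : IntegrableOn (fun u => (u - T) * ((1 - z u) / z u)) (Ici T))
    (ϑ ϑ' : ℝ → ℝ)
    (hderiv : ∀ t ∈ Ici T, HasDerivAt ϑ (ϑ' t) t)
    (heq : ∀ t ∈ Ici T, ϑ t = 1 + z t * (ϑ t - ϑ' t)) :
    ∃ ℓ : ℝ, Tendsto (fun t => ϑ t - t) atTop (𝓝 ℓ) := by
  -- extend the coefficient (1 - z)/z continuously to all of ℝ
  set w : ℝ → ℝ := fun t => (1 - z (max t T)) / z (max t T) with hwdef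
  have hζmem : ∀ t : ℝ, z (max t T) ∈ Ioc (0:ℝ) 1 := fun t => hzrange _ (mem_Ici.mpr (le_max_right _ _))
  have hζpos : ∀ t : ℝ, 0 < z (max t T) := fun t => (hζmem t).1
  have hwcont : Continuous w := by
    have hc : Continuous fun t : ℝ => z (max t T) :=
      hzcont.comp_continuous (continuous_id.max continuous_const) fun x => mem_Ici.mpr (le_max_right _ _)
    exact (continuous_const.sub hc).div hc fun t => (hζpos t).ne'
  have hwnonneg : ∀ t, 0 ≤ w t := fun t =>
    div_nonneg (by linarith [(hζmem t).2]) (hζpos t).le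
  have hweq : ∀ t ∈ Ici T, w t = (1 - z t) / z t := by
    intro t ht
    simp only [hwdef, max_eq_left (mem_Ici.mp ht)]
  have hwint : IntegrableOn w (Ici T) :=
    hint1.congr_fun (fun t ht => (hweq t ht).symm) measurableSet_Ici
  have hwint2 : IntegrableOn (fun u => (u - T) * w u) (Ici T) :=
    hint2.congr_fun (fun t ht => by rw [hweq t ht]) measurableSet_Ici
  -- the cumulative integral W and its limit
  set W : ℝ → ℝ := fun t => ∫ s in T..t, w s with hWdef
  have hWderiv : ∀ t : ℝ, HasDerivAt W (w t) t := fun t =>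
    intervalIntegral.integral_hasDerivAt_right (hwcont.intervalIntegrable _ _)
      hwcont.stronglyMeasurable.stronglyMeasurableAtFilter hwcont.continuousAt
  have hWcont : Continuous W :=
    continuous_iff_continuousAt.mpr fun t => (hWderiv t).continuousAt
  set Winf : ℝ := ∫ s in Ioi T, w s with hWinfdef
  have hWtend : Tendsto W atTop (𝓝 Winf) :=
    intervalIntegral_tendsto_integral_Ioi T (hwint.mono_set Ioi_subset_Ici_self) tendsto_id
  have hWmono : Monotone W := by
    apply monotone_of_deriv_nonneg (fun t => (hWderiv t).differentiableAt)
    intro t; rw [(hWderiv t).deriv]; exact hwnonneg t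
  have hWle : ∀ t, W t ≤ Winf := fun t =>
    ge_of_tendsto hWtend (eventually_atTop.2 ⟨t, fun u hu => hWmono hu⟩)
  have hW0 : ∀ t, T ≤ t → 0 ≤ W t := by
    intro t ht
    have : W T = 0 := intervalIntegral.integral_same
    linarith [hWmono ht]
  -- the cumulative integral V of (s - T) * w s and its limit
  set V : ℝ → ℝ := fun t => ∫ s in T..t, (s - T) * w s with hVdef
  have hvwcont : Continuous fun s : ℝ => (s - T) * w s :=
    (continuous_id.sub continuous_const).mul hwcont
  set Vinf : ℝ := ∫ s in Ioi T, (s - T) * w s with hVinfdef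
  have hVtend : Tendsto V atTop (𝓝 Vinf) :=
    intervalIntegral_tendsto_integral_Ioi T (hwint2.mono_set Ioi_subset_Ici_self) tendsto_id
  -- key tail bound : (t - T) * (Winf - W t) ≤ Vinf - V t  for t ≥ T
  have hsplitW : ∀ t, T ≤ t → Winf - W t = ∫ s in Ioi t, w s := by
    intro t ht
    have hsplit : Winf = W t + ∫ s in Ioi t, w s := by
      rw [hWinfdef, ← Ioc_union_Ioi_eq_Ioi ht,
        setIntegral_union (Ioc_disjoint_Ioi le_rfl) measurableSet_Ioi
          ((hwcont.integrableOn_Ioc)) ((hwint.mono_set (Ioi_subset_Ici ht)))]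
      rw [hWdef]
      simp [intervalIntegral.integral_of_le ht]
    linarith
  have hsplitV : ∀ t, T ≤ t → Vinf - V t = ∫ s in Ioi t, (s - T) * w s := by
    intro t ht
    have hsplit : Vinf = V t + ∫ s in Ioi t, (s - T) * w s := by
      rw [hVinfdef, ← Ioc_union_Ioi_eq_Ioi ht,
        setIntegral_union (Ioc_disjoint_Ioi le_rfl) measurableSet_Ioi
          ((hvwcont.integrableOn_Ioc)) ((hwint2.mono_set (Ioi_subset_Ici ht)))]
      rw [hVdef]
      simp [intervalIntegral.integral_of_le ht]
    linarith
  have htail : ∀ t, T ≤ t → (t - T) * (Winf - W t) ≤ Vinf - V t := by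
    intro t ht
    rw [hsplitW t ht, hsplitV t ht, ← integral_const_mul]
    apply setIntegral_mono_on
    · exact (hwint.mono_set (Ioi_subset_Ici ht)).const_mul _
    · exact hwint2.mono_set (Ioi_subset_Ici ht)
    · exact measurableSet_Ioi
    · intro s hs
      have : t - T ≤ s - T := by simp at hs; linarith
      exact mul_le_mul_of_nonneg_right this (hwnonneg s)
  have htail0 : ∀ t, T ≤ t → 0 ≤ Winf - W t := fun t _ => by linarith [hWle t]
  -- the integrating-factor solution
  set E : ℝ → ℝ := fun t => Real.exp (W t) with hEdef
  have hEcont : Continuous E := Real.continuous_exp.comp hWcont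
  set g : ℝ → ℝ := fun t => (ϑ t - 1) * E t with hgdef
  have hgderiv : ∀ t ∈ Ici T, HasDerivAt g (E t) t := by
    intro t ht
    have h := ((hderiv t ht).sub_const 1).mul (hWderiv t).exp
    have hz0 : z t ≠ 0 := (hzrange t ht).1.ne'
    have hkey : ϑ' t + (ϑ t - 1) * w t = 1 := by
      rw [hweq t ht]
      field_simp
      linear_combination heq t ht
    refine HasDerivAt.congr_deriv h ?_
    simp only [hEdef]
    nlinarith [Real.exp_pos (W t), hkey]
  have hFTC : ∀ t, T ≤ t → (∫ s in T..t, E s) = g t - g T := by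
    intro t ht
    apply intervalIntegral.integral_eq_sub_of_hasDerivAt
    · intro x hx
      rw [uIcc_of_le ht] at hx
      exact hgderiv x hx.1
    · exact hEcont.intervalIntegrable _ _
  -- the correction term φ and its integral Φ
  set φ : ℝ → ℝ := fun s => Real.exp Winf - E s with hφdef
  have hφcont : Continuous φ := continuous_const.sub hEcont
  have hφnonneg : ∀ s, 0 ≤ φ s := by
    intro s
    have := Real.exp_le_exp.2 (hWle s)
    simp only [hφdef, hEdef]
    linarith
  have hφle : ∀ s, φ s ≤ Real.exp Winf * (Winf - W s) := by
    intro s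
    have h1 := Real.add_one_le_exp (W s - Winf)
    have hmul : Real.exp (W s - Winf) * Real.exp Winf = Real.exp (W s) := by
      rw [← Real.exp_add]; ring_nf
    simp only [hφdef, hEdef]
    nlinarith [Real.exp_pos Winf]
  -- bound ∫_T^t (Winf - W s) ds ≤ Vinf  (integration by parts)
  have hψbound : ∀ t, T ≤ t → (∫ s in T..t, (Winf - W s)) ≤ Vinf := by
    intro t ht
    have hu : ∀ x ∈ uIcc T t,
        HasDerivAt (fun s => (s - T) * (Winf - W s)) ((Winf - W x) - (x - T) * w x) x := by
      intro x _
      have h1 : HasDerivAt (fun s : ℝ => s - T) 1 x := (hasDerivAt_id x).sub_const T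
      have h2 : HasDerivAt (fun s => Winf - W s) (-w x) x := (hWderiv x).const_sub Winf
      have := h1.mul h2
      refine HasDerivAt.congr_deriv this ?_
      ring
    have hparts := intervalIntegral.integral_eq_sub_of_hasDerivAt hu
      (((continuous_const.sub hWcont).sub hvwcont).intervalIntegrable _ _)
    rw [intervalIntegral.integral_sub (f := fun s => Winf - W s) (g := fun s => (s - T) * w s) ((continuous_const.sub hWcont).intervalIntegrable _ _)
      (hvwcont.intervalIntegrable _ _)] at hparts
    simp only [sub_self, zero_mul, sub_zero] at hparts
    have h2 := htail t ht
    have h3 : V t = ∫ s in T..t, (s - T) * w s := rfl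
    linarith
  -- φ is integrable on (T, ∞)
  have hVnonneg : ∀ t, T ≤ t → 0 ≤ Vinf - V t := by
    intro t ht
    rw [hsplitV t ht]
    apply setIntegral_nonneg measurableSet_Ioi
    intro s hs
    have : T ≤ s := le_trans ht (le_of_lt hs)
    exact mul_nonneg (by linarith) (hwnonneg s)
  have hVinf_nonneg : 0 ≤ Vinf := by
    have := hVnonneg T le_rfl
    have hVT : V T = 0 := intervalIntegral.integral_same
    linarith
  have hφint : IntegrableOn φ (Ioi T) := by
    apply integrableOn_Ioi_of_intervalIntegral_norm_bounded (Real.exp Winf * Vinf) T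
      (fun i : ℝ => hφcont.integrableOn_Ioc) tendsto_id
    filter_upwards [eventually_ge_atTop T] with t ht
    have hnorm : (fun s => ‖φ s‖) = φ := funext fun s => Real.norm_of_nonneg (hφnonneg s)
    simp only [id_eq, hnorm]
    calc (∫ s in T..t, φ s)
        ≤ ∫ s in T..t, Real.exp Winf * (Winf - W s) := by
          apply intervalIntegral.integral_mono_on ht (hφcont.intervalIntegrable _ _)
            ((continuous_const.mul (continuous_const.sub hWcont)).intervalIntegrable _ _)
          intro s _
          exact hφle s
      _ = Real.exp Winf * ∫ s in T..t, (Winf - W s) := by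
          rw [← intervalIntegral.integral_const_mul]
      _ ≤ Real.exp Winf * Vinf :=
          mul_le_mul_of_nonneg_left (hψbound t ht) (Real.exp_pos _).le
  set Φ : ℝ → ℝ := fun t => ∫ s in T..t, φ s with hΦdef
  set Φinf : ℝ := ∫ s in Ioi T, φ s with hΦinfdef
  have hΦtend : Tendsto Φ atTop (𝓝 Φinf) :=
    intervalIntegral_tendsto_integral_Ioi T hφint tendsto_id
  -- the explicit formula for ϑ t - t for t ≥ T
  have hformula : ∀ t, T ≤ t → ϑ t - t =
      1 - T + (g T - Φ t) * Real.exp (-W t) + (Real.exp (Winf - W t) - 1) * (t - T) := by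
    intro t ht
    have h1 := hFTC t ht
    have h2 : (∫ s in T..t, E s) = Real.exp Winf * (t - T) - Φ t := by
      have h3 : Φ t = (t - T) * Real.exp Winf - ∫ s in T..t, E s := by
        rw [hΦdef]
        simp only [hφdef]
        rw [intervalIntegral.integral_sub (intervalIntegrable_const)
          (hEcont.intervalIntegrable _ _), intervalIntegral.integral_const, smul_eq_mul]
      linarith
    have hEpos : (0:ℝ) < Real.exp (W t) := Real.exp_pos _
    have hgt : g t = (ϑ t - 1) * Real.exp (W t) := rfl
    have h4 : (ϑ t - 1) * Real.exp (W t) = g T + (Real.exp Winf * (t - T) - Φ t) := by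
      rw [← hgt]; linarith
    have key : (ϑ t - t) * Real.exp (W t) =
        (1 - T + (g T - Φ t) * Real.exp (-W t) + (Real.exp (Winf - W t) - 1) * (t - T)) *
          Real.exp (W t) := by
      rw [Real.exp_sub, Real.exp_neg]
      field_simp
      linear_combination h4
    exact mul_right_cancel₀ hEpos.ne' key
  -- the limit
  refine ⟨1 - T + (g T - Φinf) * Real.exp (-Winf) + 0, ?_⟩
  have hA : Tendsto (fun t => 1 - T + (g T - Φ t) * Real.exp (-W t))
      atTop (𝓝 (1 - T + (g T - Φinf) * Real.exp (-Winf))) := by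
    apply tendsto_const_nhds.add
    exact (tendsto_const_nhds.sub hΦtend).mul ((Real.continuous_exp.tendsto _).comp hWtend.neg)
  have hB : Tendsto (fun t => (Real.exp (Winf - W t) - 1) * (t - T)) atTop (𝓝 0) := by
    apply squeeze_zero' (f := fun t => (Real.exp (Winf - W t) - 1) * (t - T))
      (g := fun t => Real.exp Winf * (Vinf - V t))
    · filter_upwards [eventually_ge_atTop T] with t ht
      have h1 : (0:ℝ) ≤ Winf - W t := htail0 t ht
      have h2 := Real.add_one_le_exp (Winf - W t)
      nlinarith
    · filter_upwards [eventually_ge_atTop T] with t ht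
      have hδ : (0:ℝ) ≤ Winf - W t := htail0 t ht
      have hδle : Winf - W t ≤ Winf := by linarith [hW0 t ht]
      have h2 := Real.add_one_le_exp (W t - Winf)
      have hmul : Real.exp (W t - Winf) * Real.exp (Winf - W t) = 1 := by
        rw [← Real.exp_add]; simp
      have hexple : Real.exp (Winf - W t) - 1 ≤ (Winf - W t) * Real.exp (Winf - W t) := by
        nlinarith [Real.exp_pos (Winf - W t)]
      have hexpbd : Real.exp (Winf - W t) ≤ Real.exp Winf := Real.exp_le_exp.2 hδle
      have htt := htail t ht
      have ht' : (0:ℝ) ≤ t - T := by linarith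
      calc (Real.exp (Winf - W t) - 1) * (t - T)
          ≤ ((Winf - W t) * Real.exp (Winf - W t)) * (t - T) :=
            mul_le_mul_of_nonneg_right hexple ht'
        _ ≤ ((Winf - W t) * Real.exp Winf) * (t - T) :=
            mul_le_mul_of_nonneg_right (mul_le_mul_of_nonneg_left hexpbd hδ) ht'
        _ = Real.exp Winf * ((t - T) * (Winf - W t)) := by ring
        _ ≤ Real.exp Winf * (Vinf - V t) :=
            mul_le_mul_of_nonneg_left htt (Real.exp_pos _).le
    · have h0 : Tendsto (fun t => Vinf - V t) atTop (𝓝 (Vinf - Vinf)) :=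
        tendsto_const_nhds.sub hVtend
      rw [sub_self] at h0
      have h := h0.const_mul (Real.exp Winf)
      simpa using h
  have := hA.add hB
  apply this.congr'
  filter_upwards [eventually_ge_atTop T] with t ht
  exact (hformula t ht).symm
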